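/- Let a₁,…,aₙ be positive reals and w₁,…,wₙ nonnegative weights with Σᵢ wᵢ = 1, and let M(a₁,…,aₙ; w₁,…,wₙ) be the informational mean, i.e. the Fisher information ∫_ℝ (p'(x))²/p(x) dx of the mixture density p(x) = Σᵢ wᵢ φ_{σᵢ}(x) with σᵢ² = 1/aᵢ. Then min(a₁,…,aₙ) ≤ M(a₁,…,aₙ; w₁,…,wₙ) ≤ max(a₁,…,aₙ); together with positive homogeneity this shows the informational mean is a mean function. -/

import Mathlib

open MeasureTheory Real
open Filter

/-- The centered Gaussian density with scale `σ`: `φ_σ(x) = (2πσ²)^{-1/2} exp(−x²/(2σ²))`. -/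
noncomputable def gaussianDensity (σ : ℝ) (x : ℝ) : ℝ :=
  (2 * π * σ ^ 2) ^ (-(1 : ℝ) / 2) * Real.exp (-x ^ 2 / (2 * σ ^ 2))

lemma two_pi_sq_pos {σ : ℝ} (hσ : 0 < σ) : 0 < 2 * π * σ ^ 2 := by positivity

lemma gd_pos {σ : ℝ} (hσ : 0 < σ) (x : ℝ) : 0 < gaussianDensity σ x := by
  unfold gaussianDensity
  positivity

lemma gd_cont (σ : ℝ) : Continuous (gaussianDensity σ) := by
  unfold gaussianDensity
  fun_prop

lemma gd_eq {σ : ℝ} (hσ : 0 < σ) (x : ℝ) :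
    gaussianDensity σ x = (√(2 * π * σ ^ 2))⁻¹ * Real.exp (-((2 * σ ^ 2)⁻¹) * x ^ 2) := by
  unfold gaussianDensity
  rw [show (-(1:ℝ)/2) = -(1/2) by norm_num, Real.rpow_neg (two_pi_sq_pos hσ).le,
    Real.sqrt_eq_rpow]
  congr 1
  ring

lemma gd_hasDerivAt {σ : ℝ} (hσ : 0 < σ) (x : ℝ) :
    HasDerivAt (gaussianDensity σ) (-(x / σ ^ 2) * gaussianDensity σ x) x := by
  unfold gaussianDensity
  have h1 : HasDerivAt (fun y : ℝ => -y ^ 2 / (2 * σ ^ 2)) (-(2 * x) / (2 * σ ^ 2)) x := by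
    have := (hasDerivAt_pow 2 x).neg.div_const (2 * σ ^ 2)
    simpa using this
  have h2 := (h1.exp).const_mul ((2 * π * σ ^ 2) ^ (-(1 : ℝ) / 2))
  refine HasDerivAt.congr_deriv h2 ?_
  have : σ ^ 2 ≠ 0 := by positivity
  field_simp

lemma integrable_sq_mul_exp_neg_mul_sq {b : ℝ} (hb : 0 < b) :
    Integrable fun x : ℝ => x ^ 2 * Real.exp (-b * x ^ 2) := by
  have h := integrable_rpow_mul_exp_neg_mul_sq hb (by norm_num : (-1 : ℝ) < 2)
  have heq : (fun x : ℝ => x ^ (2:ℝ) * Real.exp (-b * x ^ 2))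
      = fun x : ℝ => x ^ 2 * Real.exp (-b * x ^ 2) := by
    funext x
    rw [show (2:ℝ) = ((2:ℕ):ℝ) by norm_num, Real.rpow_natCast]
  rwa [heq] at h

lemma tendsto_mul_exp_neg_mul_sq_atTop {b : ℝ} (hb : 0 < b) :
    Tendsto (fun x : ℝ => x * Real.exp (-b * x ^ 2)) atTop (nhds 0) := by
  have h := rpow_mul_exp_neg_mul_sq_isLittleO_exp_neg hb 1
  have h2 : Tendsto (fun x : ℝ => Real.exp (-(1/2) * x)) atTop (nhds 0) := by
    have h : Tendsto (fun x : ℝ => (1/2 : ℝ) * x) atTop atTop :=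
      tendsto_id.const_mul_atTop (by norm_num)
    have h' := tendsto_neg_atTop_atBot.comp h
    exact Real.tendsto_exp_atBot.comp (h'.congr fun x => by simp)
  have := h.isBigO.trans_tendsto h2
  refine this.congr' ?_
  filter_upwards [eventually_gt_atTop 0] with x hx
  rw [Real.rpow_one]

lemma tendsto_mul_exp_neg_mul_sq_atBot {b : ℝ} (hb : 0 < b) :
    Tendsto (fun x : ℝ => x * Real.exp (-b * x ^ 2)) atBot (nhds 0) := by
  have h1 : Tendsto (fun x : ℝ => -((-x) * Real.exp (-b * (-x) ^ 2))) atBot (nhds 0) := by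
    have := (tendsto_mul_exp_neg_mul_sq_atTop hb).comp tendsto_neg_atBot_atTop
    simpa using this.neg
  refine h1.congr fun x => by ring_nf

lemma integral_sq_mul_exp_neg_mul_sq {b : ℝ} (hb : 0 < b) :
    ∫ x : ℝ, x ^ 2 * Real.exp (-b * x ^ 2) = Real.sqrt (π / b) / (2 * b) := by
  set f : ℝ → ℝ := fun x => x * Real.exp (-b * x ^ 2) with hf
  set f' : ℝ → ℝ := fun x => Real.exp (-b * x ^ 2) - 2 * b * (x ^ 2 * Real.exp (-b * x ^ 2))
    with hf'
  have hderiv : ∀ x : ℝ, HasDerivAt f (f' x) x := by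
    intro x
    have h1 : HasDerivAt (fun y : ℝ => -b * y ^ 2) (-b * (2 * x)) x := by
      simpa using ((hasDerivAt_pow 2 x).const_mul (-b))
    have := (hasDerivAt_id x).mul h1.exp
    refine HasDerivAt.congr_deriv this ?_
    simp [hf']
    ring
  have hint : Integrable f' := by
    exact (integrable_exp_neg_mul_sq hb).sub
      ((integrable_sq_mul_exp_neg_mul_sq hb).const_mul (2 * b))
  have hIoi : ∫ x in Set.Ioi (0:ℝ), f' x = 0 - f 0 :=
    MeasureTheory.integral_Ioi_of_hasDerivAt_of_tendsto' (fun x _ => hderiv x)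
      hint.integrableOn (tendsto_mul_exp_neg_mul_sq_atTop hb)
  have hIic : ∫ x in Set.Iic (0:ℝ), f' x = f 0 - 0 :=
    MeasureTheory.integral_Iic_of_hasDerivAt_of_tendsto' (fun x _ => hderiv x)
      hint.integrableOn (tendsto_mul_exp_neg_mul_sq_atBot hb)
  have htot : ∫ x : ℝ, f' x = 0 := by
    rw [← intervalIntegral.integral_Iic_add_Ioi hint.integrableOn hint.integrableOn, hIoi, hIic]
    ring
  have hsplit : ∫ x : ℝ, f' x =
      (∫ x : ℝ, Real.exp (-b * x ^ 2)) - 2 * b * ∫ x : ℝ, x ^ 2 * Real.exp (-b * x ^ 2) := by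
    rw [hf']
    rw [MeasureTheory.integral_sub (integrable_exp_neg_mul_sq hb)
      ((integrable_sq_mul_exp_neg_mul_sq hb).const_mul (2 * b)),
      MeasureTheory.integral_const_mul]
  rw [htot, integral_gaussian] at hsplit
  have h2b : (2 * b) ≠ 0 := by positivity
  field_simp at hsplit ⊢
  linarith

lemma gd_b_pos {σ : ℝ} (hσ : 0 < σ) : 0 < (2 * σ ^ 2)⁻¹ := by positivity

lemma gd_integrable {σ : ℝ} (hσ : 0 < σ) : Integrable (gaussianDensity σ) := by
  have : Integrable fun x : ℝ => Real.exp (-((2 * σ ^ 2)⁻¹) * x ^ 2) :=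
    integrable_exp_neg_mul_sq (gd_b_pos hσ)
  have h := this.const_mul ((√(2 * π * σ ^ 2))⁻¹)
  exact h.congr (by filter_upwards with x using (gd_eq hσ x).symm)

lemma gd_sq_integrable {σ : ℝ} (hσ : 0 < σ) :
    Integrable (fun x => x ^ 2 * gaussianDensity σ x) := by
  have h := (integrable_sq_mul_exp_neg_mul_sq (gd_b_pos hσ)).const_mul ((√(2 * π * σ ^ 2))⁻¹)
  refine h.congr (by filter_upwards with x; rw [gd_eq hσ x]; ring)

lemma sqrt_pi_div : ∀ {σ : ℝ}, 0 < σ → √(π / (2 * σ ^ 2)⁻¹) = √(2 * π * σ ^ 2) := by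
  intro σ hσ
  congr 1
  field_simp

lemma gd_integral {σ : ℝ} (hσ : 0 < σ) : ∫ x : ℝ, gaussianDensity σ x = 1 := by
  have h : ∫ x : ℝ, gaussianDensity σ x
      = (√(2 * π * σ ^ 2))⁻¹ * ∫ x : ℝ, Real.exp (-((2 * σ ^ 2)⁻¹) * x ^ 2) := by
    rw [← MeasureTheory.integral_const_mul]
    exact integral_congr_ae (by filter_upwards with x using gd_eq hσ x)
  rw [h, integral_gaussian, sqrt_pi_div hσ]
  rw [inv_mul_cancel₀]
  positivity

lemma gd_sq_integral {σ : ℝ} (hσ : 0 < σ) :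
    ∫ x : ℝ, x ^ 2 * gaussianDensity σ x = σ ^ 2 := by
  have h : ∫ x : ℝ, x ^ 2 * gaussianDensity σ x
      = (√(2 * π * σ ^ 2))⁻¹ * ∫ x : ℝ, x ^ 2 * Real.exp (-((2 * σ ^ 2)⁻¹) * x ^ 2) := by
    rw [← MeasureTheory.integral_const_mul]
    refine integral_congr_ae (by filter_upwards with x; rw [gd_eq hσ x]; ring)
  rw [h, integral_sq_mul_exp_neg_mul_sq (gd_b_pos hσ), sqrt_pi_div hσ]
  have h1 : (0:ℝ) < √(2 * π * σ ^ 2) := by positivity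
  have h2 : (2 * (2 * σ ^ 2)⁻¹) = (σ^2)⁻¹ := by
    field_simp
  rw [h2]
  field_simp

lemma sigma_pos {a : ℝ} (ha : 0 < a) : 0 < Real.sqrt (1 / a) :=
  Real.sqrt_pos.mpr (by positivity)

lemma sigma_sq {a : ℝ} (ha : 0 < a) : Real.sqrt (1 / a) ^ 2 = 1 / a :=
  Real.sq_sqrt (by positivity)

/-- Gaussian scale mixture with coefficients `c`. -/
noncomputable def S (n : ℕ) (c a : Fin n → ℝ) (x : ℝ) : ℝ :=
  ∑ i, c i * gaussianDensity (Real.sqrt (1 / a i)) x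

lemma S_cont (n : ℕ) (c a : Fin n → ℝ) : Continuous (S n c a) := by
  unfold S
  exact continuous_finset_sum _ fun i _ => continuous_const.mul (gd_cont _)

lemma S_nonneg {n : ℕ} {c a : Fin n → ℝ} (hc : ∀ i, 0 ≤ c i) (ha : ∀ i, 0 < a i) (x : ℝ) :
    0 ≤ S n c a x :=
  Finset.sum_nonneg fun i _ => mul_nonneg (hc i) (gd_pos (sigma_pos (ha i)) x).le

lemma S_pos {n : ℕ} {c a : Fin n → ℝ} (hc : ∀ i, 0 ≤ c i) (ha : ∀ i, 0 < a i)
    {j : Fin n} (hj : 0 < c j) (x : ℝ) : 0 < S n c a x :=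
  Finset.sum_pos' (fun i _ => mul_nonneg (hc i) (gd_pos (sigma_pos (ha i)) x).le)
    ⟨j, Finset.mem_univ j, mul_pos hj (gd_pos (sigma_pos (ha j)) x)⟩

lemma S_sq_integrable {n : ℕ} (c a : Fin n → ℝ) (ha : ∀ i, 0 < a i) :
    Integrable (fun x : ℝ => x ^ 2 * S n c a x) := by
  have h : Integrable (fun x : ℝ =>
      ∑ i, c i * (x ^ 2 * gaussianDensity (Real.sqrt (1 / a i)) x)) :=
    integrable_finset_sum _ fun i _ => (gd_sq_integrable (sigma_pos (ha i))).const_mul (c i)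
  refine h.congr (Filter.Eventually.of_forall fun x => ?_)
  unfold S
  dsimp only
  rw [Finset.mul_sum]
  exact Finset.sum_congr rfl fun i _ => by ring

lemma S_sq_integral {n : ℕ} (c a : Fin n → ℝ) (ha : ∀ i, 0 < a i) :
    ∫ x : ℝ, x ^ 2 * S n c a x = ∑ i, c i / a i := by
  have h1 : ∫ x : ℝ, x ^ 2 * S n c a x
      = ∫ x : ℝ, ∑ i, c i * (x ^ 2 * gaussianDensity (Real.sqrt (1 / a i)) x) := by
    refine integral_congr_ae (Filter.Eventually.of_forall fun x => ?_)
    unfold S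
    dsimp only
    rw [Finset.mul_sum]
    exact Finset.sum_congr rfl fun i _ => by ring
  rw [h1, integral_finset_sum _
    (fun i _ => (gd_sq_integrable (sigma_pos (ha i))).const_mul (c i))]
  refine Finset.sum_congr rfl fun i _ => ?_
  rw [MeasureTheory.integral_const_mul, gd_sq_integral (sigma_pos (ha i)), sigma_sq (ha i)]
  ring

lemma S_hasDerivAt {n : ℕ} (c a : Fin n → ℝ) (ha : ∀ i, 0 < a i) (x : ℝ) :
    HasDerivAt (S n c a) (-x * S n (fun i => c i * a i) a x) x := by
  have h : HasDerivAt (S n c a)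
      (∑ i, c i * (-(x / (Real.sqrt (1 / a i)) ^ 2) *
        gaussianDensity (Real.sqrt (1 / a i)) x)) x :=
    HasDerivAt.fun_sum fun i _ => (gd_hasDerivAt (sigma_pos (ha i)) x).const_mul (c i)
  convert h using 1
  unfold S
  rw [Finset.mul_sum]
  refine Finset.sum_congr rfl fun i _ => ?_
  rw [sigma_sq (ha i)]
  have := (ha i).ne'
  field_simp

lemma S_cauchySchwarz {n : ℕ} {w a : Fin n → ℝ} (hw : ∀ i, 0 ≤ w i) (ha : ∀ i, 0 < a i)
    (x : ℝ) : (S n (fun i => w i * a i) a x) ^ 2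
      ≤ S n w a x * S n (fun i => w i * a i ^ 2) a x := by
  unfold S
  refine Finset.sum_sq_le_sum_mul_sum_of_sq_eq_mul Finset.univ
    (fun i _ => mul_nonneg (hw i) (gd_pos (sigma_pos (ha i)) x).le)
    (fun i _ => mul_nonneg (mul_nonneg (hw i) (sq_nonneg _)) (gd_pos (sigma_pos (ha i)) x).le)
    (fun i _ => by ring)


/-- The informational mean of positive reals `a₁,…,aₙ` with weights `w₁,…,wₙ`: the Fisher
information of the Gaussian scale mixture `p(x) = Σᵢ wᵢ φ_{σᵢ}(x)` with `σᵢ² = 1/aᵢ`. -/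
noncomputable def informationalMean (n : ℕ) (w a : Fin n → ℝ) : ℝ :=
  ∫ x : ℝ, (deriv (fun y => ∑ i, w i * gaussianDensity (Real.sqrt (1 / a i)) y) x) ^ 2 /
    (∑ i, w i * gaussianDensity (Real.sqrt (1 / a i)) x)

/-- The informational mean lies between the minimum and the maximum of its arguments. -/
theorem informationalMean_between_min_max (n : ℕ) (hn : 0 < n) (w a : Fin n → ℝ)
    (hw : ∀ i, 0 ≤ w i) (hws : ∑ i, w i = 1) (ha : ∀ i, 0 < a i) :
    Finset.univ.inf' (Finset.univ_nonempty_iff.mpr (Fin.pos_iff_nonempty.mp hn)) a ≤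
        informationalMean n w a ∧
      informationalMean n w a ≤
        Finset.univ.sup' (Finset.univ_nonempty_iff.mpr (Fin.pos_iff_nonempty.mp hn)) a := by
  have hne : Finset.univ.Nonempty := Finset.univ_nonempty_iff.mpr (Fin.pos_iff_nonempty.mp hn)
  set m := Finset.univ.inf' hne a with hmdef
  set M := Finset.univ.sup' hne a with hMdef
  obtain ⟨j, hj⟩ : ∃ j, 0 < w j := by
    by_contra h
    push_neg at h
    have h0 : ∑ i, w i = 0 := Finset.sum_eq_zero fun i _ => le_antisymm (h i) (hw i)
    rw [h0] at hws
    norm_num at hws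
  have hm_le : ∀ i, m ≤ a i := fun i => Finset.inf'_le a (Finset.mem_univ i)
  have hM_ge : ∀ i, a i ≤ M := fun i => Finset.le_sup' a (Finset.mem_univ i)
  have hm_pos : 0 < m := by
    obtain ⟨i0, _, h0⟩ := Finset.exists_mem_eq_inf' hne a
    rw [hmdef, h0]
    exact ha i0
  have hM_pos : 0 < M := lt_of_lt_of_le hm_pos ((hm_le ⟨0, hn⟩).trans (hM_ge ⟨0, hn⟩))
  -- abbreviations
  set S0 : ℝ → ℝ := S n w a with hS0def
  set S1 : ℝ → ℝ := S n (fun i => w i * a i) a with hS1def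
  set S2 : ℝ → ℝ := S n (fun i => w i * a i ^ 2) a with hS2def
  have hS0pos : ∀ x, 0 < S0 x := fun x => S_pos hw ha hj x
  -- rewrite the informational mean
  have hIM : informationalMean n w a = ∫ x : ℝ, (x ^ 2 * (S1 x) ^ 2) / S0 x := by
    unfold informationalMean
    refine integral_congr_ae (Filter.Eventually.of_forall fun x => ?_)
    have hd : deriv (fun y => ∑ i, w i * gaussianDensity (Real.sqrt (1 / a i)) y) x
        = -x * S1 x := by
      have h := S_hasDerivAt w a ha x
      have : (fun y => ∑ i, w i * gaussianDensity (Real.sqrt (1 / a i)) y) = S n w a := rfl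
      rw [this, h.deriv, hS1def]
    show deriv (fun y => ∑ i, w i * gaussianDensity (Real.sqrt (1 / a i)) y) x ^ 2 /
        (∑ i, w i * gaussianDensity (Real.sqrt (1 / a i)) x) = x ^ 2 * S1 x ^ 2 / S0 x
    rw [hd, show (∑ i, w i * gaussianDensity (Real.sqrt (1 / a i)) x) = S0 x from rfl]
    ring
  -- integrability and integral values
  have hI0 : Integrable (fun x : ℝ => x ^ 2 * S0 x) := S_sq_integrable w a ha
  have hI1 : Integrable (fun x : ℝ => x ^ 2 * S1 x) := S_sq_integrable _ a ha
  have hI2 : Integrable (fun x : ℝ => x ^ 2 * S2 x) := S_sq_integrable _ a ha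
  set A : ℝ := ∑ i, w i / a i with hAdef
  have hJ0 : ∫ x : ℝ, x ^ 2 * S0 x = A := S_sq_integral w a ha
  have hJ1 : ∫ x : ℝ, x ^ 2 * S1 x = 1 := by
    rw [hS1def, S_sq_integral _ a ha, ← hws]
    exact Finset.sum_congr rfl fun i _ => by
      rw [mul_div_assoc, div_self (ha i).ne', mul_one]
  have hJ2 : ∫ x : ℝ, x ^ 2 * S2 x = ∑ i, w i * a i := by
    rw [hS2def, S_sq_integral _ a ha]
    refine Finset.sum_congr rfl fun i _ => ?_
    have := (ha i).ne'
    field_simp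
  -- pointwise bounds on q
  have hq_nonneg : ∀ x : ℝ, 0 ≤ (x ^ 2 * (S1 x) ^ 2) / S0 x := fun x =>
    div_nonneg (by positivity) (hS0pos x).le
  have hq_le : ∀ x : ℝ, (x ^ 2 * (S1 x) ^ 2) / S0 x ≤ x ^ 2 * S2 x := by
    intro x
    rw [div_le_iff₀ (hS0pos x)]
    have h := S_cauchySchwarz hw ha x
    calc x ^ 2 * S1 x ^ 2 ≤ x ^ 2 * (S0 x * S2 x) :=
          mul_le_mul_of_nonneg_left h (sq_nonneg x)
      _ = x ^ 2 * S2 x * S0 x := by ring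
  -- upper bound
  have hupper : informationalMean n w a ≤ M := by
    rw [hIM]
    have h1 : ∫ x : ℝ, (x ^ 2 * (S1 x) ^ 2) / S0 x ≤ ∫ x : ℝ, x ^ 2 * S2 x :=
      integral_mono_of_nonneg (Filter.Eventually.of_forall hq_nonneg) hI2
        (Filter.Eventually.of_forall hq_le)
    refine h1.trans ?_
    rw [hJ2]
    calc ∑ i, w i * a i ≤ ∑ i, w i * M :=
          Finset.sum_le_sum fun i _ => mul_le_mul_of_nonneg_left (hM_ge i) (hw i)
      _ = M := by rw [← Finset.sum_mul, hws, one_mul]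
  -- lower bound
  have hq_cont : Continuous (fun x : ℝ => (x ^ 2 * (S1 x) ^ 2) / S0 x) := by
    refine Continuous.div ?_ ?_ fun x => (hS0pos x).ne'
    · exact (continuous_pow 2).mul ((S_cont n _ a).pow 2)
    · exact S_cont n w a
  have hq_int : Integrable (fun x : ℝ => (x ^ 2 * (S1 x) ^ 2) / S0 x) := by
    refine hI2.mono' hq_cont.aestronglyMeasurable ?_
    filter_upwards with x
    rw [Real.norm_of_nonneg (hq_nonneg x)]
    exact hq_le x
  set C : ℝ := ∫ x : ℝ, (x ^ 2 * (S1 x) ^ 2) / S0 x with hCdef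
  have hC_nonneg : 0 ≤ C := integral_nonneg hq_nonneg
  have key : ∀ t : ℝ, 0 ≤ A * (t * t) + (-2) * t + C := by
    intro t
    have hpt : ∀ x : ℝ, 0 ≤ t ^ 2 * (x ^ 2 * S0 x) + (-2 * t) * (x ^ 2 * S1 x)
        + (x ^ 2 * (S1 x) ^ 2) / S0 x := by
      intro x
      have hs2 : Real.sqrt (S0 x) ^ 2 = S0 x := Real.sq_sqrt (hS0pos x).le
      have hs0 : Real.sqrt (S0 x) ≠ 0 := (Real.sqrt_pos.mpr (hS0pos x)).ne'
      have heq : t ^ 2 * (x ^ 2 * S0 x) + (-2 * t) * (x ^ 2 * S1 x)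
          + (x ^ 2 * (S1 x) ^ 2) / S0 x
          = (t * x * Real.sqrt (S0 x) - x * S1 x / Real.sqrt (S0 x)) ^ 2 := by
        rw [← hs2]
        field_simp
        simp only [Real.sqrt_sq (Real.sqrt_nonneg _)]
        ring
      rw [heq]
      exact sq_nonneg _
    have hint : Integrable (fun x : ℝ => t ^ 2 * (x ^ 2 * S0 x) + (-2 * t) * (x ^ 2 * S1 x)
        + (x ^ 2 * (S1 x) ^ 2) / S0 x) :=
      ((hI0.const_mul (t ^ 2)).add (hI1.const_mul (-2 * t))).add hq_int
    have h0 : 0 ≤ ∫ x : ℝ, (t ^ 2 * (x ^ 2 * S0 x) + (-2 * t) * (x ^ 2 * S1 x)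
        + (x ^ 2 * (S1 x) ^ 2) / S0 x) := integral_nonneg hpt
    have h_add : Integrable (fun x : ℝ => t ^ 2 * (x ^ 2 * S0 x) + (-2 * t) * (x ^ 2 * S1 x)) :=
      (hI0.const_mul (t ^ 2)).add (hI1.const_mul (-2 * t))
    rw [MeasureTheory.integral_add h_add hq_int,
      MeasureTheory.integral_add (hI0.const_mul (t ^ 2)) (hI1.const_mul (-2 * t)),
      MeasureTheory.integral_const_mul, MeasureTheory.integral_const_mul, hJ0, hJ1, ← hCdef] at h0
    nlinarith [h0]
  have hdisc := discrim_le_zero key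
  rw [discrim] at hdisc
  have hAC : 1 ≤ A * C := by nlinarith [hdisc]
  have hA_le : A ≤ 1 / m := by
    rw [hAdef]
    calc ∑ i, w i / a i ≤ ∑ i, w i / m :=
          Finset.sum_le_sum fun i _ => div_le_div_of_nonneg_left (hw i) hm_pos (hm_le i)
      _ = 1 / m := by rw [← Finset.sum_div, hws]
  have hlower : m ≤ informationalMean n w a := by
    rw [hIM]
    have h1 : A * C ≤ (1 / m) * C := mul_le_mul_of_nonneg_right hA_le hC_nonneg
    have h2 : (1:ℝ) ≤ (1 / m) * C := le_trans hAC h1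
    have h3 : m * 1 ≤ m * ((1 / m) * C) := mul_le_mul_of_nonneg_left h2 hm_pos.le
    have h4 : m * ((1 / m) * C) = C := by field_simp
    linarith
  exact ⟨hlower, hupper⟩
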